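/- Let $Y(1), Y(0)$ be real random variables with finite second moments, let $p \in (0,1)$, $\bar Y = (1-p)Y(1) + pY(0)$, $\tau = Y(1) - Y(0)$, $\sigma_d^2 = \mathrm{Var}(Y(d))$. Then $(p - p^2)^{-1}\mathrm{Var}(\bar Y) = \sigma_1^2/p + \sigma_0^2/(1-p) - \mathrm{Var}(\tau) \le \sigma_1^2/p + \sigma_0^2/(1-p) - (\sigma_1 - \sigma_0)^2 \le \sigma_1^2/p + \sigma_0^2/(1-p)$. -/

import Mathlib

open MeasureTheory ProbabilityTheory

private lemma norm_mul_le_half_sq_add_sq (a b : ℝ) : ‖a * b‖ ≤ (a ^ 2 + b ^ 2) / 2 := by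
  rw [Real.norm_eq_abs, abs_mul]
  nlinarith [sq_nonneg (|a| - |b|), sq_abs a, sq_abs b]

private lemma memLp_variance_eq' {Ω : Type*} [MeasurableSpace Ω] {P : Measure Ω}
    {X : Ω → ℝ} (hX : MemLp X 2 P) :
    variance X P = ∫ ω, (((X - fun _ => P[X]) ^ (2 : ℕ) : Ω → ℝ)) ω ∂P :=
  variance_eq_integral hX.aemeasurable

/-- Neyman-style variance decomposition and bounds: for `Ȳ = (1-p)Y(1) + pY(0)`,
`τ = Y(1) - Y(0)`, `σ_d² = Var(Y(d))`,
`(p - p²)⁻¹ Var(Ȳ) = σ₁²/p + σ₀²/(1-p) - Var(τ) ≤ σ₁²/p + σ₀²/(1-p) - (σ₁ - σ₀)²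
 ≤ σ₁²/p + σ₀²/(1-p)`. -/
theorem neyman_variance_bounds {Ω : Type*} [MeasurableSpace Ω]
    (P : Measure Ω) [IsProbabilityMeasure P]
    (Y1 Y0 : Ω → ℝ) (hY1 : MemLp Y1 2 P) (hY0 : MemLp Y0 2 P)
    (p : ℝ) (hp0 : 0 < p) (hp1 : p < 1) :
    (p - p ^ 2)⁻¹ * variance (fun ω => (1 - p) * Y1 ω + p * Y0 ω) P
        = variance Y1 P / p + variance Y0 P / (1 - p) - variance (fun ω => Y1 ω - Y0 ω) P ∧
    variance Y1 P / p + variance Y0 P / (1 - p) - variance (fun ω => Y1 ω - Y0 ω) P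
        ≤ variance Y1 P / p + variance Y0 P / (1 - p)
          - (Real.sqrt (variance Y1 P) - Real.sqrt (variance Y0 P)) ^ 2 ∧
    variance Y1 P / p + variance Y0 P / (1 - p)
          - (Real.sqrt (variance Y1 P) - Real.sqrt (variance Y0 P)) ^ 2
        ≤ variance Y1 P / p + variance Y0 P / (1 - p) := by
  set μ1 : ℝ := ∫ ω, Y1 ω ∂P with hμ1
  set μ0 : ℝ := ∫ ω, Y0 ω ∂P with hμ0
  set f : Ω → ℝ := fun ω => Y1 ω - μ1 with hf
  set g : Ω → ℝ := fun ω => Y0 ω - μ0 with hg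
  have hf2 : MemLp f 2 P := hY1.sub (memLp_const μ1)
  have hg2 : MemLp g 2 P := hY0.sub (memLp_const μ0)
  have hfint : Integrable Y1 P := hY1.integrable (by norm_num)
  have hgint : Integrable Y0 P := hY0.integrable (by norm_num)
  have hfsq : Integrable (fun ω => f ω ^ 2) P := hf2.integrable_sq
  have hgsq : Integrable (fun ω => g ω ^ 2) P := hg2.integrable_sq
  have hfg : Integrable (fun ω => f ω * g ω) P := by
    refine Integrable.mono' ((hfsq.add hgsq).div_const 2)
      (hf2.aestronglyMeasurable.mul hg2.aestronglyMeasurable) ?_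
    filter_upwards with ω
    simpa only [Pi.add_apply] using norm_mul_le_half_sq_add_sq (f ω) (g ω)
  set V1 : ℝ := variance Y1 P with hV1def
  set V0 : ℝ := variance Y0 P with hV0def
  set C : ℝ := ∫ ω, f ω * g ω ∂P with hC
  have hV1 : V1 = ∫ ω, f ω ^ 2 ∂P := by
    rw [hV1def, memLp_variance_eq' hY1]; rfl
  have hV0 : V0 = ∫ ω, g ω ^ 2 ∂P := by
    rw [hV0def, memLp_variance_eq' hY0]; rfl
  -- variance of the mixture
  have hZ2 : MemLp (fun ω => (1 - p) * Y1 ω + p * Y0 ω) 2 P :=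
    (hY1.const_mul (1 - p)).add (hY0.const_mul p)
  have hZmean : (∫ ω, ((1 - p) * Y1 ω + p * Y0 ω) ∂P) = (1 - p) * μ1 + p * μ0 := by
    rw [integral_add (hfint.const_mul _) (hgint.const_mul _), integral_const_mul,
      integral_const_mul]
  have hVarZ : variance (fun ω => (1 - p) * Y1 ω + p * Y0 ω) P
      = (1 - p) ^ 2 * V1 + p ^ 2 * V0 + 2 * ((1 - p) * p) * C := by
    rw [memLp_variance_eq' hZ2]
    have hint : ((fun ω => (1 - p) * Y1 ω + p * Y0 ω) -
        fun _ => ∫ ω, ((1 - p) * Y1 ω + p * Y0 ω) ∂P) ^ (2 : ℕ)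
        = fun ω => (1 - p) ^ 2 * f ω ^ 2 + p ^ 2 * g ω ^ 2
            + 2 * ((1 - p) * p) * (f ω * g ω) := by
      funext ω
      simp only [Pi.pow_apply, Pi.sub_apply, hZmean, hf, hg]
      ring
    rw [hint]
    have i1 : Integrable (fun ω => (1 - p) ^ 2 * f ω ^ 2) P := hfsq.const_mul _
    have i2 : Integrable (fun ω => p ^ 2 * g ω ^ 2) P := hgsq.const_mul _
    have i12 : Integrable (fun ω => (1 - p) ^ 2 * f ω ^ 2 + p ^ 2 * g ω ^ 2) P := i1.add i2
    have i3 : Integrable (fun ω => 2 * ((1 - p) * p) * (f ω * g ω)) P := hfg.const_mul _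
    show (∫ ω, (((1 - p) ^ 2 * f ω ^ 2 + p ^ 2 * g ω ^ 2)
        + 2 * ((1 - p) * p) * (f ω * g ω)) ∂P) = _
    rw [integral_add i12 i3, integral_add i1 i2, integral_const_mul,
      integral_const_mul, integral_const_mul, hV1, hV0]
  -- variance of the difference
  have hT2 : MemLp (fun ω => Y1 ω - Y0 ω) 2 P := hY1.sub hY0
  have hTmean : (∫ ω, (Y1 ω - Y0 ω) ∂P) = μ1 - μ0 := integral_sub hfint hgint
  have hVarT : variance (fun ω => Y1 ω - Y0 ω) P = V1 + V0 - 2 * C := by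
    rw [memLp_variance_eq' hT2]
    have hint : ((fun ω => Y1 ω - Y0 ω) - fun _ => ∫ ω, (Y1 ω - Y0 ω) ∂P) ^ (2 : ℕ)
        = fun ω => f ω ^ 2 + g ω ^ 2 - 2 * (f ω * g ω) := by
      funext ω
      simp only [Pi.pow_apply, Pi.sub_apply, hTmean, hf, hg]
      ring
    rw [hint]
    have i12 : Integrable (fun ω => f ω ^ 2 + g ω ^ 2) P := hfsq.add hgsq
    have i3 : Integrable (fun ω => 2 * (f ω * g ω)) P := hfg.const_mul _
    show (∫ ω, ((f ω ^ 2 + g ω ^ 2) - 2 * (f ω * g ω)) ∂P) = _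
    rw [integral_sub i12 i3, integral_add hfsq hgsq, integral_const_mul, hV1, hV0]
  -- Cauchy–Schwarz: C ≤ √V1 * √V0
  have hCS : C ≤ Real.sqrt V1 * Real.sqrt V0 := by
    have h1 : C ≤ ∫ ω, |f ω| * |g ω| ∂P := by
      refine integral_mono hfg ?_ (fun ω => ?_)
      · simpa [abs_mul] using hfg.abs
      · rw [← abs_mul]; exact le_abs_self _
    have hconj : (2 : ℝ).HolderConjugate 2 := Real.HolderConjugate.two_two
    have h2 : (∫ ω, |f ω| * |g ω| ∂P)
        ≤ (∫ ω, |f ω| ^ (2 : ℝ) ∂P) ^ ((1 : ℝ) / 2) * (∫ ω, |g ω| ^ (2 : ℝ) ∂P) ^ ((1 : ℝ) / 2) := by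
      refine integral_mul_le_Lp_mul_Lq_of_nonneg hconj
        (Filter.Eventually.of_forall fun ω => abs_nonneg _)
        (Filter.Eventually.of_forall fun ω => abs_nonneg _) ?_ ?_
      · rw [ENNReal.ofReal_ofNat]; exact hf2.abs
      · rw [ENNReal.ofReal_ofNat]; exact hg2.abs
    have hfa : (∫ ω, |f ω| ^ (2 : ℝ) ∂P) = ∫ ω, f ω ^ 2 ∂P := by
      refine integral_congr_ae (Filter.Eventually.of_forall fun ω => ?_)
      show |f ω| ^ (2 : ℝ) = f ω ^ 2
      rw [show ((2 : ℝ) = ((2 : ℕ) : ℝ)) by norm_num, Real.rpow_natCast, sq_abs]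
    have hga : (∫ ω, |g ω| ^ (2 : ℝ) ∂P) = ∫ ω, g ω ^ 2 ∂P := by
      refine integral_congr_ae (Filter.Eventually.of_forall fun ω => ?_)
      show |g ω| ^ (2 : ℝ) = g ω ^ 2
      rw [show ((2 : ℝ) = ((2 : ℕ) : ℝ)) by norm_num, Real.rpow_natCast, sq_abs]
    rw [hfa, hga, ← hV1, ← hV0] at h2
    have hs1 : V1 ^ ((1 : ℝ) / 2) = Real.sqrt V1 := by
      rw [Real.sqrt_eq_rpow]
    have hs0 : V0 ^ ((1 : ℝ) / 2) = Real.sqrt V0 := by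
      rw [Real.sqrt_eq_rpow]
    rw [hs1, hs0] at h2
    exact h1.trans h2
  have hV1n : 0 ≤ V1 := variance_nonneg _ _
  have hV0n : 0 ≤ V0 := variance_nonneg _ _
  have hsq1 : Real.sqrt V1 ^ 2 = V1 := Real.sq_sqrt hV1n
  have hsq0 : Real.sqrt V0 ^ 2 = V0 := Real.sq_sqrt hV0n
  refine ⟨?_, ?_, ?_⟩
  · rw [hVarZ, hVarT]
    have h1 : p ≠ 0 := ne_of_gt hp0
    have h2 : (1 - p) ≠ 0 := by linarith
    have h3 : p - p ^ 2 ≠ 0 := by nlinarith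
    field_simp
    ring
  · rw [hVarT]
    nlinarith [hCS]
  · nlinarith [sq_nonneg (Real.sqrt V1 - Real.sqrt V0)]
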